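/- Under round-to-nearest ties-to-even, an even float z absorbs exactly the closed interval of reals of radius half its neighboring gaps: if z is finite with even significand, then round(x) = z for all reals x with z − Δ⁻(z)/2 ≤ x ≤ z + Δ⁺(z)/2, where Δ⁺(z) = z⁺ − z and Δ⁻(z) = z − z⁻ (with Δ⁺(±0) = Δ⁻(±0) = f_min and Δ⁺(f_max) = 2^{1−p+e_max}); if z has odd significand the same holds with strict inequalities. -/
import Mathlib


open scoped Classical

/-- Finite binary floating-point numbers with precision `p` and exponent range
`[emin, emax]` (subnormals included), viewed as real numbers. -/
def FF (p : ℕ) (emin emax : ℤ) : Set ℝ :=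
  {x | ∃ m e : ℤ, |m| < 2 ^ p ∧ emin ≤ e ∧ e ≤ emax ∧
        x = (m : ℝ) * (2 : ℝ) ^ (e + 1 - (p : ℤ))}

/-- Binary floating-point numbers with precision `p` and unbounded exponent. -/
def FInf (p : ℕ) : Set ℝ :=
  {x | ∃ m e : ℤ, |m| < 2 ^ p ∧ x = (m : ℝ) * (2 : ℝ) ^ e}

/-- `z` has an even least-significant significand bit (canonical representation),
format with bounded exponents. -/
def evenFF (p : ℕ) (emin emax : ℤ) (z : ℝ) : Prop :=
  ∃ m e : ℤ, |m| < 2 ^ p ∧ emin ≤ e ∧ e ≤ emax ∧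
    z = (m : ℝ) * (2 : ℝ) ^ (e + 1 - (p : ℤ)) ∧ 2 ∣ m ∧
    ((2 : ℤ) ^ (p - 1) ≤ |m| ∨ e = emin)

/-- `z` has an odd least-significant significand bit (canonical representation). -/
def oddFF (p : ℕ) (emin emax : ℤ) (z : ℝ) : Prop :=
  ∃ m e : ℤ, |m| < 2 ^ p ∧ emin ≤ e ∧ e ≤ emax ∧
    z = (m : ℝ) * (2 : ℝ) ^ (e + 1 - (p : ℤ)) ∧ ¬ 2 ∣ m ∧
    ((2 : ℤ) ^ (p - 1) ≤ |m| ∨ e = emin)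

/-- Evenness of the significand for the unbounded-exponent format. -/
def evenInf (p : ℕ) (z : ℝ) : Prop :=
  ∃ m e : ℤ, z = (m : ℝ) * (2 : ℝ) ^ e ∧ 2 ∣ m ∧
    (((2 : ℤ) ^ (p - 1) ≤ |m| ∧ |m| < 2 ^ p) ∨ m = 0)

/-- `rnd` is round-to-nearest with ties-to-even onto the set `F` of representable
numbers, `even` being the evenness predicate used to break ties. -/
def IsRNE (F : Set ℝ) (even : ℝ → Prop) (rnd : ℝ → ℝ) : Prop :=
  ∀ x : ℝ, rnd x ∈ F ∧ (∀ y ∈ F, |x - rnd x| ≤ |x - y|) ∧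
    (∀ y ∈ F, y ≠ rnd x → |x - rnd x| = |x - y| → even (rnd x))

/-- The successor of `x` in the set `F`. -/
noncomputable def succF (F : Set ℝ) (x : ℝ) : ℝ := sInf {y | y ∈ F ∧ x < y}

/-- The predecessor of `x` in the set `F`. -/
noncomputable def predF (F : Set ℝ) (x : ℝ) : ℝ := sSup {y | y ∈ F ∧ y < x}

/-- The largest finite float, `f_max = (2 - 2^(1-p)) * 2^emax`. -/
noncomputable def fmax (p : ℕ) (emax : ℤ) : ℝ :=
  (2 - (2 : ℝ) ^ (1 - (p : ℤ))) * (2 : ℝ) ^ emax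

/-- The smallest positive (subnormal) float, `f_min = 2^(emin+1-p)`. -/
noncomputable def fminF (p : ℕ) (emin : ℤ) : ℝ := (2 : ℝ) ^ (emin + 1 - (p : ℤ))

/-- The gap `Δ⁺(z)` between `z` and its successor, with the special cases
`Δ⁺(±0) = f_min` and `Δ⁺(f_max) = 2^(1-p+emax)`. -/
noncomputable def dplusF (p : ℕ) (emin emax : ℤ) (z : ℝ) : ℝ :=
  if z = fmax p emax then (2 : ℝ) ^ (1 - (p : ℤ) + emax)
  else if z = 0 then fminF p emin
  else succF (FF p emin emax) z - z

/-- The gap `Δ⁻(z)` between `z` and its predecessor, with the special cases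
`Δ⁻(±0) = f_min` and `Δ⁻(-f_max) = 2^(1-p+emax)`. -/
noncomputable def dminusF (p : ℕ) (emin emax : ℤ) (z : ℝ) : ℝ :=
  if z = -fmax p emax then (2 : ℝ) ^ (1 - (p : ℤ) + emax)
  else if z = 0 then fminF p emin
  else z - predF (FF p emin emax) z


section RNEHelpers

variable {p : ℕ} {emin emax : ℤ}

private lemma zp_pos (a : ℤ) : (0:ℝ) < (2:ℝ) ^ a := zpow_pos (by norm_num) a

private lemma zp_mono {a b : ℤ} (h : a ≤ b) : (2:ℝ) ^ a ≤ (2:ℝ) ^ b :=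
  zpow_le_zpow_right₀ (by norm_num) h

private lemma zp_mul (a b : ℤ) : (2:ℝ) ^ a * (2:ℝ) ^ b = (2:ℝ) ^ (a + b) :=
  (zpow_add₀ (by norm_num) a b).symm

private lemma cast_shift (m' E e' : ℤ) (h : E ≤ e') :
    (m' : ℝ) * (2:ℝ) ^ (e' + 1 - (p:ℤ)) =
      ((m' * 2 ^ (e' - E).toNat : ℤ) : ℝ) * (2:ℝ) ^ (E + 1 - (p:ℤ)) := by
  have hk : ((e' - E).toNat : ℤ) = e' - E := Int.toNat_of_nonneg (by omega)
  push_cast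
  rw [mul_assoc, ← zpow_natCast (2:ℝ) (e' - E).toNat, zp_mul, hk]
  congr 2
  ring

private lemma no_between {a m' E e' : ℤ} (hE : E ≤ e')
    (h1 : (a : ℝ) * (2:ℝ) ^ (E + 1 - (p:ℤ)) < (m' : ℝ) * (2:ℝ) ^ (e' + 1 - (p:ℤ)))
    (h2 : (m' : ℝ) * (2:ℝ) ^ (e' + 1 - (p:ℤ)) < ((a : ℝ) + 1) * (2:ℝ) ^ (E + 1 - (p:ℤ))) :
    False := by
  rw [cast_shift m' E e' hE] at h1 h2
  have hpos := zp_pos (E + 1 - (p:ℤ))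
  have h1' : (a : ℝ) < ((m' * 2 ^ (e' - E).toNat : ℤ) : ℝ) := lt_of_mul_lt_mul_right h1 hpos.le
  have h2' : ((m' * 2 ^ (e' - E).toNat : ℤ) : ℝ) < (a : ℝ) + 1 := lt_of_mul_lt_mul_right h2 hpos.le
  have h1i : a < m' * 2 ^ (e' - E).toNat := by exact_mod_cast h1'
  have h2i : m' * 2 ^ (e' - E).toNat < a + 1 := by exact_mod_cast h2'
  omega

private lemma abs_y_lt {m' : ℤ} (e' : ℤ) (hm : |m'| < 2 ^ p) :
    |(m' : ℝ) * (2:ℝ) ^ (e' + 1 - (p:ℤ))| < (2:ℝ) ^ (e' + 1) := by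
  rw [abs_mul, abs_of_pos (zp_pos _)]
  have h1 : |(m' : ℝ)| < (2:ℝ) ^ (p:ℤ) := by
    rw [← Int.cast_abs, zpow_natCast]
    exact_mod_cast hm
  calc |(m' : ℝ)| * (2:ℝ) ^ (e' + 1 - (p:ℤ)) < (2:ℝ) ^ (p:ℤ) * (2:ℝ) ^ (e' + 1 - (p:ℤ)) := by
        exact mul_lt_mul_of_pos_right h1 (zp_pos _)
    _ = (2:ℝ) ^ (e' + 1) := by rw [zp_mul]; congr 1; ring

private lemma fmax_eq : fmax p emax = ((2:ℝ) ^ (p:ℤ) - 1) * (2:ℝ) ^ (emax + 1 - (p:ℤ)) := by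
  unfold fmax
  have h1 : (2:ℝ) ^ (p:ℤ) * (2:ℝ) ^ (emax + 1 - (p:ℤ)) = 2 * (2:ℝ) ^ emax := by
    rw [zp_mul]
    have : (p:ℤ) + (emax + 1 - (p:ℤ)) = 1 + emax := by ring
    rw [this, ← zp_mul]
    norm_num
  have h2 : (2:ℝ) ^ (1 - (p:ℤ)) * (2:ℝ) ^ emax = (2:ℝ) ^ (emax + 1 - (p:ℤ)) := by
    rw [zp_mul]; congr 1; ring
  nlinarith [h1, h2]

private lemma fmax_pos (hp : 1 ≤ p) : 0 < fmax p emax := by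
  rw [fmax_eq]
  have : (2:ℝ) ^ (1:ℤ) ≤ (2:ℝ) ^ (p:ℤ) := zp_mono (by exact_mod_cast hp)
  have := zp_pos (emax + 1 - (p:ℤ))
  nlinarith

private lemma FF_le_fmax {y : ℝ} (hy : y ∈ FF p emin emax) : y ≤ fmax p emax := by
  obtain ⟨m, e, hm, he1, he2, rfl⟩ := hy
  rw [fmax_eq]
  have h1 : (m : ℝ) ≤ (2:ℝ) ^ (p:ℤ) - 1 := by
    have : m ≤ 2 ^ p - 1 := by have := (abs_lt.1 hm).2; omega
    have h2 : (m : ℝ) ≤ ((2 ^ p - 1 : ℤ) : ℝ) := by exact_mod_cast this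
    rw [zpow_natCast]; push_cast at h2 ⊢; linarith
  calc (m : ℝ) * (2:ℝ) ^ (e + 1 - (p:ℤ)) ≤ ((2:ℝ) ^ (p:ℤ) - 1) * (2:ℝ) ^ (e + 1 - (p:ℤ)) :=
        mul_le_mul_of_nonneg_right h1 (zp_pos _).le
    _ ≤ ((2:ℝ) ^ (p:ℤ) - 1) * (2:ℝ) ^ (emax + 1 - (p:ℤ)) := by
        have h3 : (1:ℝ) ≤ (2:ℝ) ^ (p:ℤ) := by
          have := zp_mono (show (0:ℤ) ≤ (p:ℤ) by positivity)
          simpa using this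
        exact mul_le_mul_of_nonneg_left (zp_mono (by omega)) (by linarith)

private lemma FF_neg {y : ℝ} (hy : y ∈ FF p emin emax) : -y ∈ FF p emin emax := by
  obtain ⟨m, e, hm, he1, he2, rfl⟩ := hy
  exact ⟨-m, e, by simpa using hm, he1, he2, by push_cast; ring⟩

end RNEHelpers
section RNEHelpers2

variable {p : ℕ} {emin emax : ℤ}

private lemma canon_unique_aux (hp : 1 ≤ p) {m e m' e' : ℤ}
    (hm : |m| < 2 ^ p)
    (hcan : (2:ℤ) ^ (p - 1) ≤ |m| ∨ e = emin)
    (hcan' : (2:ℤ) ^ (p - 1) ≤ |m'| ∨ e' = emin)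
    (he1 : emin ≤ e) (he1' : emin ≤ e') (hle : e ≤ e')
    (heq : (m : ℝ) * (2:ℝ) ^ (e + 1 - (p:ℤ)) = (m' : ℝ) * (2:ℝ) ^ (e' + 1 - (p:ℤ))) :
    m = m' := by
  rw [cast_shift m' e e' hle] at heq
  have hmm : m = m' * 2 ^ (e' - e).toNat := by
    have := mul_right_cancel₀ (ne_of_gt (zp_pos (e + 1 - (p:ℤ)))) heq
    exact_mod_cast this
  rcases eq_or_lt_of_le hle with heq' | hlt
  · subst heq'; simpa using hmm
  · -- e < e'
    exfalso
    rcases eq_or_ne m' 0 with rfl | hm0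
    · simp at hmm
      have h1 : e = emin := by
        rcases hcan with h | h
        · exfalso; simp [hmm] at h
          have : (0:ℤ) < 2 ^ (p-1) := by positivity
          omega
        · exact h
      have h2 : e' = emin := by
        rcases hcan' with h | h
        · exfalso; simp at h
          have : (0:ℤ) < 2 ^ (p-1) := by positivity
          omega
        · exact h
      omega
    · have h2 : (2:ℤ) ^ (p - 1) ≤ |m'| := by
        rcases hcan' with h | h
        · exact h
        · omega
      have hk1 : 1 ≤ (e' - e).toNat := by omega
      have hk2 : (2:ℤ) ^ 1 ≤ 2 ^ (e' - e).toNat := pow_le_pow_right₀ (by norm_num) hk1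
      have habs : |m| = |m'| * 2 ^ (e' - e).toNat := by
        rw [hmm, abs_mul, abs_pow]
        norm_num
      have hp2 : (2:ℤ) ^ p = 2 ^ (p - 1) * 2 := by
        rw [← pow_succ]; congr 1; omega
      nlinarith [abs_nonneg m', hm, habs, h2, hk2]

private lemma canon_unique (hp : 1 ≤ p) {m e m' e' : ℤ}
    (hm : |m| < 2 ^ p)
    (hcan : (2:ℤ) ^ (p - 1) ≤ |m| ∨ e = emin)
    (hm' : |m'| < 2 ^ p)
    (hcan' : (2:ℤ) ^ (p - 1) ≤ |m'| ∨ e' = emin)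
    (he1 : emin ≤ e) (he1' : emin ≤ e')
    (heq : (m : ℝ) * (2:ℝ) ^ (e + 1 - (p:ℤ)) = (m' : ℝ) * (2:ℝ) ^ (e' + 1 - (p:ℤ))) :
    m = m' := by
  rcases le_total e e' with h | h
  · exact canon_unique_aux hp hm hcan hcan' he1 he1' h heq
  · exact (canon_unique_aux hp hm' hcan' hcan he1' he1 h heq.symm).symm

/-- a canonical odd representation rules out evenness -/
private lemma not_evenFF (hp : 1 ≤ p) {z : ℝ} {m e : ℤ}
    (hm : |m| < 2 ^ p) (he1 : emin ≤ e) (he2 : e ≤ emax)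
    (hz : z = (m : ℝ) * (2:ℝ) ^ (e + 1 - (p:ℤ)))
    (hcan : (2:ℤ) ^ (p - 1) ≤ |m| ∨ e = emin)
    (hodd : ¬ 2 ∣ m) : ¬ evenFF p emin emax z := by
  rintro ⟨m', e', hm', he1', he2', hz', hev, hcan'⟩
  have : m = m' := canon_unique hp hm hcan hm' hcan' he1 he1' (by rw [← hz, ← hz'])
  exact hodd (this ▸ hev)

end RNEHelpers2
section RNEHelpers3

variable {p : ℕ} {emin emax : ℤ}

private lemma cast_pow_pred (hp : 1 ≤ p) : (((2:ℤ) ^ (p - 1) : ℤ) : ℝ) = (2:ℝ) ^ ((p:ℤ) - 1) := by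
  push_cast
  rw [← zpow_natCast (2:ℝ) (p - 1)]
  congr 1
  omega

private lemma z_ge (hp : 1 ≤ p) {m e : ℤ} (h : (2:ℤ) ^ (p - 1) ≤ m) :
    (2:ℝ) ^ e ≤ (m : ℝ) * (2:ℝ) ^ (e + 1 - (p:ℤ)) := by
  have h1 : (2:ℝ) ^ ((p:ℤ) - 1) ≤ (m : ℝ) := by
    rw [← cast_pow_pred hp]; exact_mod_cast h
  calc (2:ℝ) ^ e = 2 ^ ((p:ℤ) - 1) * 2 ^ (e + 1 - (p:ℤ)) := by rw [zp_mul]; congr 1; ring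
    _ ≤ (m : ℝ) * 2 ^ (e + 1 - (p:ℤ)) := mul_le_mul_of_nonneg_right h1 (zp_pos _).le

private lemma z_le_neg (hp : 1 ≤ p) {m e : ℤ} (h : m ≤ -2 ^ (p - 1)) :
    (m : ℝ) * (2:ℝ) ^ (e + 1 - (p:ℤ)) ≤ -(2:ℝ) ^ e := by
  have h1 : (m : ℝ) ≤ -(2:ℝ) ^ ((p:ℤ) - 1) := by
    rw [← cast_pow_pred hp]
    exact_mod_cast h
  calc (m : ℝ) * 2 ^ (e + 1 - (p:ℤ)) ≤ -(2:ℝ) ^ ((p:ℤ) - 1) * 2 ^ (e + 1 - (p:ℤ)) :=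
        mul_le_mul_of_nonneg_right h1 (zp_pos _).le
    _ = -(2:ℝ) ^ e := by rw [neg_mul, zp_mul]; congr 2; ring

private lemma y_small {y : ℝ} {m' e' : ℤ} (E : ℤ) (hm' : |m'| < 2 ^ p) (hE : e' < E)
    (hy : y = (m' : ℝ) * (2:ℝ) ^ (e' + 1 - (p:ℤ))) : |y| < (2:ℝ) ^ E := by
  have h1 := abs_y_lt (p := p) e' hm'
  have h2 := zp_mono (show e' + 1 ≤ E by omega)
  rw [hy]; linarith

private lemma succ_exists (hp : 2 ≤ p) {z : ℝ} {m e : ℤ}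
    (hm : |m| < 2 ^ p) (he1 : emin ≤ e) (he2 : e ≤ emax)
    (hz : z = (m : ℝ) * (2:ℝ) ^ (e + 1 - (p:ℤ)))
    (hcan : (2:ℤ) ^ (p - 1) ≤ |m| ∨ e = emin)
    (hzmax : z ≠ fmax p emax) :
    ∃ (s : ℝ) (ms es : ℤ), |ms| < 2 ^ p ∧ emin ≤ es ∧ es ≤ emax ∧
      s = (ms : ℝ) * (2:ℝ) ^ (es + 1 - (p:ℤ)) ∧
      ((2:ℤ) ^ (p - 1) ≤ |ms| ∨ es = emin) ∧ (2 ∣ m → ¬ 2 ∣ ms) ∧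
      z < s ∧ ∀ y ∈ FF p emin emax, z < y → s ≤ y := by
  have hp1 : 1 ≤ p := by omega
  have hp2 : (2:ℤ) ^ p = 2 ^ (p - 1) * 2 := by rw [← pow_succ]; congr 1; omega
  have hppos : (0:ℤ) < 2 ^ (p - 1) := by positivity
  have habs := abs_lt.1 hm
  by_cases hb : m = 2 ^ p - 1
  · -- m maximal at this exponent: go to next binade
    have hee2 : e < emax := by
      rcases eq_or_lt_of_le he2 with h | h
      · exfalso; apply hzmax
        rw [hz, hb, h, fmax_eq, zpow_natCast]
        push_cast
        ring
      · exact h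
    refine ⟨(2:ℝ) ^ (e + 1), 2 ^ (p - 1), e + 1, ?_, by omega, by omega, ?_, Or.inl ?_, ?_, ?_, ?_⟩
    · rw [abs_of_nonneg hppos.le]; omega
    · rw [cast_pow_pred hp1, zp_mul]; congr 1; ring
    · rw [abs_of_nonneg hppos.le]
    · intro hev; exfalso; omega
    · rw [hz, hb]
      have hs : (2:ℝ) ^ (e + 1) = (((2:ℤ) ^ p : ℤ) : ℝ) * 2 ^ (e + 1 - (p:ℤ)) := by
        push_cast
        rw [← zpow_natCast (2:ℝ) p, zp_mul]
        congr 1; ring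
      rw [hs]
      apply mul_lt_mul_of_pos_right _ (zp_pos _)
      exact_mod_cast (by omega : (2:ℤ)^p - 1 < 2^p)
    · rintro y ⟨m', e', hm', he1', he2', rfl⟩ hzy
      by_contra hlt
      push_neg at hlt
      rcases le_or_gt e e' with hE | hE
      · refine no_between (p := p) (a := 2 ^ p - 1) (m' := m') hE ?_ ?_
        · rw [hz, hb] at hzy; exact_mod_cast hzy
        · have hs : (((2:ℤ) ^ p - 1 : ℤ) : ℝ) + 1 = (((2:ℤ) ^ p : ℤ) : ℝ) := by push_cast; ring
          rw [hs]
          calc (m' : ℝ) * 2 ^ (e' + 1 - (p:ℤ)) < (2:ℝ) ^ (e + 1) := hlt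
            _ = (((2:ℤ) ^ p : ℤ) : ℝ) * 2 ^ (e + 1 - (p:ℤ)) := by
                push_cast; rw [← zpow_natCast (2:ℝ) p, zp_mul]; congr 1; ring
      · have h1 := y_small e hm' hE rfl
        have h2 : (2:ℝ) ^ e ≤ z := by
          rw [hz, hb]
          exact z_ge hp1 (by omega)
        have := le_abs_self ((m' : ℝ) * (2:ℝ) ^ (e' + 1 - (p:ℤ)))
        linarith
  · by_cases ha : m = -2 ^ (p - 1) ∧ emin < e
    · -- m = -2^(p-1), descend a binade
      obtain ⟨ham, hae⟩ := ha
      have hz' : z = ((-(2 ^ p) : ℤ) : ℝ) * (2:ℝ) ^ ((e - 1) + 1 - (p:ℤ)) := by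
        rw [hz, cast_shift m (e - 1) e (by omega)]
        congr 2
        have : (e - (e - 1)).toNat = 1 := by omega
        rw [this]; omega
      refine ⟨((-(2 ^ p - 1) : ℤ) : ℝ) * (2:ℝ) ^ ((e - 1) + 1 - (p:ℤ)), -(2 ^ p - 1), e - 1,
        ?_, by omega, by omega, rfl, Or.inl ?_, ?_, ?_, ?_⟩
      · rw [abs_neg, abs_of_nonneg (by omega : (0:ℤ) ≤ 2 ^ p - 1)]; omega
      · rw [abs_neg, abs_of_nonneg (by omega : (0:ℤ) ≤ 2 ^ p - 1)]; omega
      · intro _; omega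
      · rw [hz']
        apply mul_lt_mul_of_pos_right _ (zp_pos _)
        exact_mod_cast (by omega : -(2:ℤ) ^ p < -(2 ^ p - 1))
      · rintro y ⟨m', e', hm', he1', he2', rfl⟩ hzy
        by_contra hlt
        push_neg at hlt
        rcases le_or_gt (e - 1) e' with hE | hE
        · refine no_between (p := p) (a := -(2 ^ p)) (m' := m') hE ?_ ?_
          · rw [hz'] at hzy; exact_mod_cast hzy
          · have hs : ((-(2 ^ p) : ℤ) : ℝ) + 1 = ((-(2 ^ p - 1) : ℤ) : ℝ) := by push_cast; ring
            rw [hs]; exact hlt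
        · have h1 := y_small (e - 1) hm' hE rfl
          have h2 : ((-(2 ^ p - 1) : ℤ) : ℝ) * (2:ℝ) ^ ((e - 1) + 1 - (p:ℤ)) ≤ -(2:ℝ) ^ (e - 1) :=
            z_le_neg hp1 (by omega)
          have h3 := neg_abs_le ((m' : ℝ) * (2:ℝ) ^ (e' + 1 - (p:ℤ)))
          linarith
    · -- generic: increment the significand
      have hmb : m + 1 < 2 ^ p := by omega
      have hsgn : (2:ℤ) ^ (p - 1) ≤ m ∨ m ≤ -2 ^ (p - 1) ∨ e = emin := by
        rcases hcan with h | h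
        · rcases abs_cases m with ⟨h1, _⟩ | ⟨h1, _⟩
          · left; omega
          · right; left; omega
        · right; right; exact h
      refine ⟨((m + 1 : ℤ) : ℝ) * (2:ℝ) ^ (e + 1 - (p:ℤ)), m + 1, e, ?_, he1, he2, rfl, ?_, ?_, ?_, ?_⟩
      · rw [abs_lt]; omega
      · rcases hsgn with h | h | h
        · left; rw [abs_of_nonneg (by omega)]; omega
        · rcases eq_or_lt_of_le h with h' | h'
          · right
            rcases (not_and_or.1 ha) with h'' | h''
            · omega
            · omega
          · left; rw [abs_of_nonpos (by omega)]; omega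
        · right; exact h
      · intro hev; omega
      · rw [hz]
        apply mul_lt_mul_of_pos_right _ (zp_pos _)
        exact_mod_cast (by omega : m < m + 1)
      · rintro y ⟨m', e', hm', he1', he2', rfl⟩ hzy
        by_contra hlt
        push_neg at hlt
        rcases le_or_gt e e' with hE | hE
        · refine no_between (p := p) (a := m) (m' := m') hE ?_ ?_
          · rw [hz] at hzy; exact hzy
          · have hs : ((m : ℝ) + 1) = ((m + 1 : ℤ) : ℝ) := by push_cast; ring
            rw [hs]; exact hlt
        · have hene : e ≠ emin := by omega
          rcases hsgn with h | h | h
          · have h1 := y_small e hm' hE rfl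
            have h2 : (2:ℝ) ^ e ≤ z := by rw [hz]; exact z_ge hp1 h
            have := le_abs_self ((m' : ℝ) * (2:ℝ) ^ (e' + 1 - (p:ℤ)))
            rw [hz] at hzy
            linarith
          · have hm1 : m + 1 ≤ -2 ^ (p - 1) := by
              rcases (not_and_or.1 ha) with h'' | h''
              · omega
              · omega
            have h1 := y_small e hm' hE rfl
            have h2 : ((m + 1 : ℤ) : ℝ) * (2:ℝ) ^ (e + 1 - (p:ℤ)) ≤ -(2:ℝ) ^ e :=
              z_le_neg hp1 hm1
            have h3 := neg_abs_le ((m' : ℝ) * (2:ℝ) ^ (e' + 1 - (p:ℤ)))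
            linarith
          · exact hene h

end RNEHelpers3
section RNEHelpers4

variable {p : ℕ} {emin emax : ℤ}

private lemma fmin_mem (hp : 1 ≤ p) (hee : emin ≤ emax) : fminF p emin ∈ FF p emin emax := by
  refine ⟨1, emin, ?_, le_refl _, hee, by rw [fminF]; push_cast; ring⟩
  have : (2:ℤ) ^ 1 ≤ 2 ^ p := pow_le_pow_right₀ (by norm_num) hp
  rw [abs_one]; omega

private lemma fmin_pos : 0 < fminF p emin := zp_pos _

private lemma fmin_le_pos {y : ℝ} (hy : y ∈ FF p emin emax) (hpos : 0 < y) :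
    fminF p emin ≤ y := by
  obtain ⟨m', e', hm', he1', he2', rfl⟩ := hy
  have hm0 : 0 < m' := by
    by_contra h
    push_neg at h
    have : (m' : ℝ) ≤ 0 := by exact_mod_cast h
    nlinarith [zp_pos (e' + 1 - (p:ℤ))]
  have h1 : (1:ℝ) ≤ (m' : ℝ) := by exact_mod_cast hm0
  calc fminF p emin = (2:ℝ) ^ (emin + 1 - (p:ℤ)) := rfl
    _ ≤ (2:ℝ) ^ (e' + 1 - (p:ℤ)) := zp_mono (by omega)
    _ = 1 * (2:ℝ) ^ (e' + 1 - (p:ℤ)) := (one_mul _).symm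
    _ ≤ (m' : ℝ) * (2:ℝ) ^ (e' + 1 - (p:ℤ)) := mul_le_mul_of_nonneg_right h1 (zp_pos _).le

private lemma dplus_eq (hp : 1 ≤ p) (hee : emin ≤ emax) {z s : ℝ} (hzmax : z ≠ fmax p emax)
    (hsF : s ∈ FF p emin emax) (hzs : z < s)
    (hmin : ∀ y ∈ FF p emin emax, z < y → s ≤ y) :
    dplusF p emin emax z = s - z := by
  rw [dplusF, if_neg hzmax]
  by_cases hz0 : z = 0
  · rw [if_pos hz0]
    subst hz0
    rw [sub_zero]
    exact le_antisymm (fmin_le_pos hsF hzs) (hmin _ (fmin_mem hp hee) fmin_pos)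
  · rw [if_neg hz0]
    have : succF (FF p emin emax) z = s :=
      IsLeast.csInf_eq ⟨⟨hsF, hzs⟩, fun y hy => hmin y hy.1 hy.2⟩
    rw [this]

private lemma predF_neg (z : ℝ) : predF (FF p emin emax) z = -succF (FF p emin emax) (-z) := by
  rw [predF, succF, Real.sInf_def, neg_neg]
  congr 1
  ext x
  simp only [Set.mem_neg, Set.mem_setOf_eq]
  constructor
  · rintro ⟨h1, h2⟩
    exact ⟨by simpa using FF_neg h1, by linarith⟩
  · rintro ⟨h1, h2⟩
    exact ⟨by simpa using FF_neg h1, by linarith⟩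

private lemma dminus_eq_dplus_neg (z : ℝ) :
    dminusF p emin emax z = dplusF p emin emax (-z) := by
  rw [dminusF, dplusF]
  by_cases h1 : z = -fmax p emax
  · rw [if_pos h1, if_pos (by rw [h1]; ring)]
  · rw [if_neg h1, if_neg (show ¬ -z = fmax p emax from fun h => h1 (by linarith))]
    by_cases h2 : z = 0
    · rw [if_pos h2, if_pos (by rw [h2]; ring)]
    · rw [if_neg h2, if_neg (show ¬ -z = 0 from fun h => h2 (by linarith))]
      rw [predF_neg]
      ring

private lemma evenFF_neg {z : ℝ} (h : evenFF p emin emax z) : evenFF p emin emax (-z) := by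
  obtain ⟨m, e, hm, he1, he2, hz, hev, hcan⟩ := h
  exact ⟨-m, e, by simpa using hm, he1, he2, by rw [hz]; push_cast; ring,
    (dvd_neg).2 hev, by simpa using hcan⟩

private lemma IsRNE_neg (rnd : ℝ → ℝ)
    (h : IsRNE (FF p emin emax) (evenFF p emin emax) rnd) :
    IsRNE (FF p emin emax) (evenFF p emin emax) (fun t => -rnd (-t)) := by
  intro t
  obtain ⟨h1, h2, h3⟩ := h (-t)
  refine ⟨FF_neg h1, ?_, ?_⟩
  · intro y hy
    have hh := h2 (-y) (FF_neg hy)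
    have e1 : |t - -rnd (-t)| = |(-t) - rnd (-t)| := by
      rw [show t - -rnd (-t) = -((-t) - rnd (-t)) by ring, abs_neg]
    have e2 : |t - y| = |(-t) - (-y)| := by
      rw [show t - y = -((-t) - (-y)) by ring, abs_neg]
    rw [e1, e2]
    exact hh
  · intro y hy hne heq
    have hev : evenFF p emin emax (rnd (-t)) := by
      apply h3 (-y) (FF_neg hy)
      · intro hcontra
        apply hne
        show y = -rnd (-t)
        rw [← hcontra, neg_neg]
      · have e1 : |(-t) - rnd (-t)| = |t - -rnd (-t)| := by
          rw [show t - -rnd (-t) = -((-t) - rnd (-t)) by ring, abs_neg]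
        have e2 : |(-t) - (-y)| = |t - y| := by
          rw [show t - y = -((-t) - (-y)) by ring, abs_neg]
        rw [e1, e2]
        exact heq
    simpa using evenFF_neg hev

private lemma rnd_le (hp : 2 ≤ p) (hee : emin ≤ emax) {rnd : ℝ → ℝ}
    (hrnd : IsRNE (FF p emin emax) (evenFF p emin emax) rnd)
    {z : ℝ} {m e : ℤ}
    (hm : |m| < 2 ^ p) (he1 : emin ≤ e) (he2 : e ≤ emax)
    (hz : z = (m : ℝ) * (2:ℝ) ^ (e + 1 - (p:ℤ)))
    (hcan : (2:ℤ) ^ (p - 1) ≤ |m| ∨ e = emin)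
    {x : ℝ}
    (hx : x < z + dplusF p emin emax z / 2 ∨
      (x ≤ z + dplusF p emin emax z / 2 ∧ 2 ∣ m)) :
    rnd x ≤ z := by
  obtain ⟨hr1, hr2, hr3⟩ := hrnd x
  by_contra hgt
  push_neg at hgt
  by_cases hzmax : z = fmax p emax
  · have := FF_le_fmax hr1
    rw [← hzmax] at this
    linarith
  obtain ⟨s, ms, es, hms, hes1, hes2, hsval, hcans, hpar, hzs, hmin⟩ :=
    succ_exists hp hm he1 he2 hz hcan hzmax
  have hsF : s ∈ FF p emin emax := ⟨ms, es, hms, hes1, hes2, hsval⟩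
  have hdp : dplusF p emin emax z = s - z :=
    dplus_eq (by omega) hee hzmax hsF hzs hmin
  have hsr : s ≤ rnd x := hmin _ hr1 hgt
  have hxU : x ≤ z + (s - z) / 2 := by
    rcases hx with h | h
    · rw [hdp] at h; linarith
    · rw [hdp] at h; linarith [h.1]
  have hxr : x < rnd x := by linarith
  have h2 := hr2 z ⟨m, e, hm, he1, he2, hz⟩
  have h7 : |x - rnd x| = rnd x - x := by
    rw [abs_sub_comm, abs_of_pos (by linarith)]
  have key : s - x ≤ |x - z| := by
    rw [h7] at h2
    linarith
  rcases le_or_gt x z with hxz | hxz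
  · rw [abs_of_nonpos (by linarith)] at key
    linarith
  · rw [abs_of_pos (by linarith)] at key
    rcases hx with h | ⟨h, hevm⟩
    · rw [hdp] at h; linarith
    · rw [hdp] at h
      have hxeq : x = z + (s - z) / 2 := by linarith
      have hrs : rnd x = s := by
        rw [h7, abs_of_pos (show (0:ℝ) < x - z by linarith)] at h2
        linarith
      have htie : |x - rnd x| = |x - z| := by
        rw [h7, hrs, abs_of_pos (by linarith)]
        linarith
      have hev := hr3 z ⟨m, e, hm, he1, he2, hz⟩
        (fun hc => absurd (hc ▸ hgt) (lt_irrefl z)) htie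
      rw [hrs] at hev
      exact not_evenFF (by omega) hms hes1 hes2 hsval hcans (hpar hevm) hev

end RNEHelpers4
/-- A finite float `z` absorbs, under round-to-nearest ties-to-even, the closed
(resp. open, for odd significand) interval of reals of radius half its
neighboring gaps. -/
theorem rne_absorption_interval (p : ℕ) (hp : 2 ≤ p) (emin emax : ℤ)
    (hee : emin ≤ emax)
    (rnd : ℝ → ℝ)
    (hrnd : IsRNE (FF p emin emax) (evenFF p emin emax) rnd) :
    ∀ z ∈ FF p emin emax,
      (evenFF p emin emax z →
        ∀ x : ℝ, z - dminusF p emin emax z / 2 ≤ x →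
          x ≤ z + dplusF p emin emax z / 2 → rnd x = z) ∧
      (oddFF p emin emax z →
        ∀ x : ℝ, z - dminusF p emin emax z / 2 < x →
          x < z + dplusF p emin emax z / 2 → rnd x = z) := by
  intro z hzF
  have hneg := IsRNE_neg rnd hrnd
  constructor
  · rintro ⟨m, e, hm, he1, he2, hz, hev, hcan⟩ x hxl hxu
    have hub : rnd x ≤ z := rnd_le hp hee hrnd hm he1 he2 hz hcan (Or.inr ⟨hxu, hev⟩)
    have hlb : z ≤ rnd x := by
      have hdm := dminus_eq_dplus_neg (p := p) (emin := emin) (emax := emax) z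
      have h2 : (fun t => -rnd (-t)) (-x) ≤ -z := by
        refine rnd_le hp hee hneg (m := -m) (e := e) (by simpa using hm) he1 he2
          (by rw [hz]; push_cast; ring) (by simpa using hcan) ?_
        right
        exact ⟨by linarith, (dvd_neg).2 hev⟩
      simp only [neg_neg] at h2
      linarith
    linarith
  · rintro ⟨m, e, hm, he1, he2, hz, hodd, hcan⟩ x hxl hxu
    have hub : rnd x ≤ z := rnd_le hp hee hrnd hm he1 he2 hz hcan (Or.inl hxu)
    have hlb : z ≤ rnd x := by
      have hdm := dminus_eq_dplus_neg (p := p) (emin := emin) (emax := emax) z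
      have h2 : (fun t => -rnd (-t)) (-x) ≤ -z := by
        refine rnd_le hp hee hneg (m := -m) (e := e) (by simpa using hm) he1 he2
          (by rw [hz]; push_cast; ring) (by simpa using hcan) ?_
        left
        show -x < -z + dplusF p emin emax (-z) / 2
        linarith
      simp only [neg_neg] at h2
      linarith
    linarith
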